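/- Let 𝔾 = (G, ε, δ) and 𝕂 = (K, ε', δ') be two comonads on a category C which generate the same projective class 𝒫 (i.e., a morphism e of C is GY-epic for all objects Y if and only if it is KY-epic for all objects Y, and 𝒫 is the common class of projectives), and suppose this projective class is Kan in the sense that for every object X and every P ∈ 𝒫 the augmented simplicial sets Hom(P, 𝔾X) and Hom(P, 𝕂X) are Kan. Then for every object X the augmented simplicial objects 𝔾X and 𝕂X are homotopically equivalent: there exist semi-simplicial maps f : 𝔾X → 𝕂X and g : 𝕂X → 𝔾X commuting with the identity on X such that g ∘ f is simplicially homotopic to the identity on 𝔾X and f ∘ g is simplicially homotopic to the identity on 𝕂X. -/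

import Mathlib

open CategoryTheory
namespace Statement8

variable {C : Type*} [Category C]

/-- Iterated application of the comonad functor: `iterObj G X n = GⁿX`. -/
def iterObj (G : Comonad C) (X : C) : ℕ → C
  | 0 => X
  | n + 1 => G.obj (iterObj G X n)

/-- Face operators of the comonad resolution `𝔾X`:
`face G X n i : Gⁿ⁺¹X ⟶ GⁿX` is `∂ᵢ = Gⁱ ε_{Gⁿ⁻ⁱX}` (meaningful for `i ≤ n`);
`face G X 0 0 = ε_X` is the augmentation. -/
def face (G : Comonad C) (X : C) : (n i : ℕ) → (iterObj G X (n + 1) ⟶ iterObj G X n)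
  | n, 0 => G.ε.app (iterObj G X n)
  | 0, _ + 1 => G.ε.app X
  | n + 1, i + 1 => G.toFunctor.map (face G X n i)

/-- A morphism `e : A ⟶ B` belongs to the class `E_𝔾` generated by the comonad `G`:
every morphism `GY ⟶ B` factors through `e`. -/
def inE (G : Comonad C) {A B : C} (e : A ⟶ B) : Prop :=
  ∀ (Y : C) (g : G.obj Y ⟶ B), ∃ h : G.obj Y ⟶ A, h ≫ e = g

/-- `P` belongs to the projective class generated by the comonad `G`:
`P` is `E_𝔾`-projective. -/
def isProj (G : Comonad C) (P : C) : Prop :=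
  ∀ {A B : C} (e : A ⟶ B), inE G e → ∀ g : P ⟶ B, ∃ h : P ⟶ A, h ≫ e = g

/-- The simplicial set `Hom(P, (obj, d))` is Kan: every `(n, k)`-horn has a filler.
Here `obj n` is the object of `n`-simplices and `d n i : obj (n+1) ⟶ obj n` the face
operators (meaningful for `i ≤ n + 1`).  The first clause treats horns of dimension `1`,
the second those of dimension `≥ 2`. -/
def KanRaw (obj : ℕ → C) (d : (n i : ℕ) → (obj (n + 1) ⟶ obj n)) (P : C) : Prop :=
  (∀ k, k ≤ 1 → ∀ a : ℕ → (P ⟶ obj 0),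
    ∃ b : P ⟶ obj 1, ∀ i, i ≤ 1 → i ≠ k → b ≫ d 0 i = a i) ∧
  (∀ (n k : ℕ), k ≤ n + 2 → ∀ a : ℕ → (P ⟶ obj (n + 1)),
    (∀ i j, i < j → j ≤ n + 2 → i ≠ k → j ≠ k →
      a j ≫ d n i = a i ≫ d n (j - 1)) →
    ∃ b : P ⟶ obj (n + 2), ∀ i, i ≤ n + 2 → i ≠ k → b ≫ d (n + 1) i = a i)

/-- A simplicial homotopy between semi-simplicial maps `f, g : (objB, dB) ⟶ (objA, dA)`:
a family `hⁿᵢ : Bₙ ⟶ Aₙ₊₁` (for `0 ≤ i ≤ n`) with `∂₀ hⁿ₀ = fₙ`, `∂ₙ₊₁ hⁿₙ = gₙ`,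
`∂ᵢ hⁿⱼ = hⁿ⁻¹ⱼ₋₁ ∂ᵢ` for `i < j`, `∂ᵢ hⁿᵢ = ∂ᵢ hⁿᵢ₋₁` for `i = j ≠ 0`, and
`∂ᵢ hⁿⱼ = hⁿ⁻¹ⱼ ∂ᵢ₋₁` for `i > j + 1`. -/
def Homot (objB objA : ℕ → C)
    (dB : (n i : ℕ) → (objB (n + 1) ⟶ objB n))
    (dA : (n i : ℕ) → (objA (n + 1) ⟶ objA n))
    (f g : ∀ n, objB n ⟶ objA n) : Prop :=
  ∃ h : (n i : ℕ) → (objB n ⟶ objA (n + 1)),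
    (∀ n, h n 0 ≫ dA n 0 = f n) ∧
    (∀ n, h n n ≫ dA n (n + 1) = g n) ∧
    (∀ n i j, i < j → j ≤ n + 1 →
      h (n + 1) j ≫ dA (n + 1) i = dB n i ≫ h n (j - 1)) ∧
    (∀ n i, 1 ≤ i → i ≤ n →
      h n i ≫ dA n i = h n (i - 1) ≫ dA n i) ∧
    (∀ n i j, j + 1 < i → i ≤ n + 2 → j ≤ n + 1 →
      h (n + 1) j ≫ dA (n + 1) i = dB n (i - 1) ≫ h n j)

section Aux

variable (T : Comonad C) (X : C)

lemma face_zero : ∀ n, face T X n 0 = T.ε.app (iterObj T X n) := fun n => by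
  cases n <;> rfl

lemma face_bot : ∀ k, face T X 0 k = T.ε.app X := fun k => by
  cases k <;> rfl

lemma sid_zero (n j : ℕ) :
    face T X (n+1) (j+1) ≫ face T X n 0 = face T X (n+1) 0 ≫ face T X n j := by
  have h := T.ε.naturality (face T X n j)
  simp only [Functor.id_map] at h
  rw [face_zero T X n, face_zero T X (n+1)]
  exact h

lemma sid : ∀ (n i j : ℕ), i < j →
    face T X (n+1) j ≫ face T X n i = face T X (n+1) i ≫ face T X n (j-1) := by
  intro n
  induction n with
  | zero =>
    intro i j hij
    match i, j, hij with
    | 0, j+1, _ =>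
      simpa using sid_zero T X 0 j
    | i+1, j+1, _ =>
      show face T X 1 (j+1) ≫ face T X 0 (i+1) = face T X 1 (i+1) ≫ face T X 0 (j+1-1)
      rw [face_bot T X (i+1), face_bot T X (j+1-1)]
      show T.toFunctor.map (face T X 0 j) ≫ T.ε.app X
        = T.toFunctor.map (face T X 0 i) ≫ T.ε.app X
      rw [face_bot T X j, face_bot T X i]
  | succ n ih =>
    intro i j hij
    match i, j, hij with
    | 0, j+1, _ => simpa using sid_zero T X (n+1) j
    | i+1, j+1, h =>
      have h' : i < j := by omega
      have hj1 : j - 1 + 1 = j := by omega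
      have e1 : face T X (n+1) j = T.toFunctor.map (face T X n (j-1)) := by
        conv_lhs => rw [← hj1]
        rfl
      show T.toFunctor.map (face T X (n+1) j) ≫ T.toFunctor.map (face T X n i)
          = T.toFunctor.map (face T X (n+1) i) ≫ face T X (n+1) (j+1-1)
      rw [← Functor.map_comp, ih i j h', Functor.map_comp, Nat.add_sub_cancel, e1]
      rfl

lemma sid2 (n i j : ℕ) (h : i < j) :
    face T X (n+2) j ≫ face T X (n+1) i = face T X (n+2) i ≫ face T X (n+1) (j-1) :=
  sid T X (n+1) i j h

lemma sid3 (n i j : ℕ) (h : i < j) :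
    face T X (n+3) j ≫ face T X (n+2) i = face T X (n+3) i ≫ face T X (n+2) (j-1) :=
  sid T X (n+2) i j h

lemma inE_eps (Z : C) : inE T (T.ε.app Z) := by
  intro Y g
  refine ⟨T.δ.app Y ≫ T.toFunctor.map g, ?_⟩
  have h := T.ε.naturality g
  simp only [Functor.id_map, Functor.id_obj] at h
  rw [Category.assoc, h, ← Category.assoc, T.left_counit, Category.id_comp]

lemma isProj_obj (Z : C) : isProj T (T.obj Z) := fun e he g => he Z g

end Aux
section Build

variable (T S : Comonad C) (X : C)

/-- Sphere filling in the comonad complex, from the Kan (horn-filling) property plus a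
splitting of the counit on `P` (the Barr contraction). -/
lemma sphereFill (P : C) (r : P ⟶ T.obj P) (hr : r ≫ T.ε.app P = 𝟙 P)
    (kan : ∀ (n k : ℕ), k ≤ n + 2 → ∀ a : ℕ → (P ⟶ iterObj T X (n + 2)),
      (∀ i j, i < j → j ≤ n + 2 → i ≠ k → j ≠ k →
        a j ≫ face T X (n+1) i = a i ≫ face T X (n+1) (j - 1)) →
      ∃ b : P ⟶ iterObj T X (n + 3), ∀ i, i ≤ n + 2 → i ≠ k →
        b ≫ face T X (n+2) i = a i)
    (n : ℕ) (a : ℕ → (P ⟶ iterObj T X (n+1)))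
    (compat : ∀ i j, i < j → j ≤ n + 1 → a j ≫ face T X n i = a i ≫ face T X n (j-1)) :
    ∃ b : P ⟶ iterObj T X (n+2), ∀ i, i ≤ n + 1 → b ≫ face T X (n+1) i = a i := by
  have hnat : ∀ (m : ℕ) (x : P ⟶ iterObj T X (m+1)),
      (r ≫ T.toFunctor.map x) ≫ face T X (m+1) 0 = x := by
    intro m x
    have h := T.ε.naturality x
    simp only [Functor.id_map, Functor.id_obj] at h
    rw [face_zero T X (m+1), Category.assoc, h, ← Category.assoc, hr, Category.id_comp]
  have hcompat : ∀ i j, i < j → j ≤ n + 2 → i ≠ 0 → j ≠ 0 →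
      (r ≫ T.toFunctor.map (a (j-1))) ≫ face T X (n+1) i
        = (r ≫ T.toFunctor.map (a (i-1))) ≫ face T X (n+1) (j-1) := by
    intro i j hij hj hi0 hj0
    match i, j, hij with
    | i+1, j+1, _ =>
      simp only [Nat.add_sub_cancel]
      have hj' : j - 1 + 1 = j := by omega
      show (r ≫ T.toFunctor.map (a j)) ≫ T.toFunctor.map (face T X n i)
        = (r ≫ T.toFunctor.map (a i)) ≫ face T X (n+1) j
      have e1 : face T X (n+1) j = T.toFunctor.map (face T X n (j-1)) := by
        conv_lhs => rw [← hj']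
        rfl
      rw [e1]
      simp only [Category.assoc, ← Functor.map_comp, compat i j (by omega) (by omega)]
      rw [Functor.map_comp]
      exact (Category.assoc _ _ _).symm
  obtain ⟨u, hu⟩ := kan n 0 (by omega) (fun i => r ≫ T.toFunctor.map (a (i-1))) hcompat
  refine ⟨u ≫ face T X (n+2) 0, ?_⟩
  intro i hi
  have h1 := sid T X (n+1) 0 (i+1) (by omega)
  simp only [Nat.add_sub_cancel] at h1
  rw [Category.assoc, ← h1, ← Category.assoc, hu (i+1) (by omega) (by omega)]
  simp only [Nat.add_sub_cancel]
  exact hnat n (a i)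

/-- Recursive construction of a sequence with linked consecutive properties. -/
lemma chainGen {α : ℕ → Sort*} (R : ∀ n, α n → α (n+1) → Prop) (a0 : α 0)
    (base : ∃ b : α 1, R 0 a0 b)
    (step : ∀ n (a : α n) (b : α (n+1)), R n a b → ∃ c : α (n+2), R (n+1) b c) :
    ∃ h : ∀ n, α n, h 0 = a0 ∧ ∀ n, R n (h n) (h (n+1)) := by
  classical
  let F : ∀ n, Σ' (a : α n) (b : α (n+1)), R n a b := fun n =>
    Nat.rec ⟨a0, base.choose, base.choose_spec⟩
      (fun n p => ⟨p.2.1, (step n p.1 p.2.1 p.2.2).choose,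
        (step n p.1 p.2.1 p.2.2).choose_spec⟩) n
  refine ⟨fun n => (F n).1, rfl, fun n => ?_⟩
  show R n (F n).1 (F (n+1)).1
  exact (F n).2.2

/-- Construction of a semi-simplicial map over the identity from the `T`-resolution to
the `S`-resolution. -/
lemma buildMap
    (hsr : ∀ m : ℕ, ∃ r : iterObj T X (m+1) ⟶ S.obj (iterObj T X (m+1)),
      r ≫ S.ε.app (iterObj T X (m+1)) = 𝟙 _)
    (hkn : ∀ m : ℕ, ∀ (n k : ℕ), k ≤ n + 2 →
      ∀ a : ℕ → (iterObj T X (m+1) ⟶ iterObj S X (n + 2)),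
      (∀ i j, i < j → j ≤ n + 2 → i ≠ k → j ≠ k →
        a j ≫ face S X (n+1) i = a i ≫ face S X (n+1) (j - 1)) →
      ∃ b : iterObj T X (m+1) ⟶ iterObj S X (n + 3), ∀ i, i ≤ n + 2 → i ≠ k →
        b ≫ face S X (n+2) i = a i)
    (base0 : ∃ f0 : iterObj T X 1 ⟶ iterObj S X 1, f0 ≫ face S X 0 0 = face T X 0 0) :
    ∃ f : ∀ n, iterObj T X (n+1) ⟶ iterObj S X (n+1),
      (f 0 ≫ face S X 0 0 = face T X 0 0) ∧
      ∀ n i, i ≤ n + 1 → f (n+1) ≫ face S X (n+1) i = face T X (n+1) i ≫ f n := by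
  obtain ⟨f0, hf0⟩ := base0
  have base1 : ∃ f1 : iterObj T X 2 ⟶ iterObj S X 2,
      ∀ i, i ≤ 1 → f1 ≫ face S X 1 i = face T X 1 i ≫ f0 := by
    obtain ⟨r, hr⟩ := hsr 1
    have hcompat : ∀ i j, i < j → j ≤ 0 + 1 →
        (face T X 1 j ≫ f0) ≫ face S X 0 i = (face T X 1 i ≫ f0) ≫ face S X 0 (j-1) := by
      intro i j hij hj
      have hi : i = 0 := by omega
      have hjj : j = 1 := by omega
      subst hi; subst hjj
      show (face T X 1 1 ≫ f0) ≫ face S X 0 0 = (face T X 1 0 ≫ f0) ≫ face S X 0 (1-1)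
      rw [Category.assoc, Category.assoc, hf0]
      have := sid T X 0 0 1 (by omega)
      exact this
    obtain ⟨f1, hf1⟩ := sphereFill S X (iterObj T X 2) r hr (hkn 1) 0
      (fun i => face T X 1 i ≫ f0) hcompat
    exact ⟨f1, fun i hi => hf1 i hi⟩
  obtain ⟨f1, hf1⟩ := base1
  have hstep : ∀ (n : ℕ) (a : iterObj T X (n+1) ⟶ iterObj S X (n+1))
      (b : iterObj T X (n+2) ⟶ iterObj S X (n+2)),
      (∀ i, i ≤ n+1 → b ≫ face S X (n+1) i = face T X (n+1) i ≫ a) →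
      ∃ c : iterObj T X (n+3) ⟶ iterObj S X (n+3),
        ∀ i, i ≤ n+2 → c ≫ face S X (n+2) i = face T X (n+2) i ≫ b := by
    intro n a b hR
    obtain ⟨r, hr⟩ := hsr (n+2)
    have hcompat : ∀ i j, i < j → j ≤ (n+1) + 1 →
        (face T X (n+2) j ≫ b) ≫ face S X (n+1) i
          = (face T X (n+2) i ≫ b) ≫ face S X (n+1) (j-1) := by
      intro i j hij hj
      rw [Category.assoc, Category.assoc, hR i (by omega), hR (j-1) (by omega),
        ← Category.assoc, ← Category.assoc, sid2 T X n i j hij]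
    obtain ⟨c, hc⟩ := sphereFill S X (iterObj T X (n+3)) r hr (hkn (n+2)) (n+1)
      (fun i => face T X (n+2) i ≫ b) hcompat
    exact ⟨c, fun i hi => hc i hi⟩
  obtain ⟨h, hh0, hh⟩ := chainGen
    (α := fun n => iterObj T X (n+1) ⟶ iterObj S X (n+1))
    (R := fun n a b =>
      ∀ i, i ≤ n+1 → b ≫ face S X (n+1) i = face T X (n+1) i ≫ a)
    f0 ⟨f1, hf1⟩ hstep
  exact ⟨h, by rw [hh0]; exact hf0, fun n i hi => (hh n) i hi⟩

end Build
section HomotStep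

variable (T : Comonad C) (X : C)

/-- The inductive step for constructing the simplicial homotopy between a semi-simplicial
endomap `u` of the resolution (over the identity) and the identity. -/
lemma homotStep
    (u : ∀ n, iterObj T X (n+1) ⟶ iterObj T X (n+1))
    (hu : ∀ n i, i ≤ n + 1 → u (n+1) ≫ face T X (n+1) i = face T X (n+1) i ≫ u n)
    (n : ℕ)
    (hornF : ∀ k, k ≤ n+3 → ∀ A : ℕ → (iterObj T X (n+3) ⟶ iterObj T X (n+3)),
      (∀ i j, i < j → j ≤ n+3 → i ≠ k → j ≠ k →
        A j ≫ face T X (n+2) i = A i ≫ face T X (n+2) (j-1)) →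
      ∃ d : iterObj T X (n+3) ⟶ iterObj T X (n+4),
        ∀ i, i ≤ n+3 → i ≠ k → d ≫ face T X (n+3) i = A i)
    (sphF : ∀ A : ℕ → (iterObj T X (n+3) ⟶ iterObj T X (n+3)),
      (∀ i j, i < j → j ≤ n+3 →
        A j ≫ face T X (n+2) i = A i ≫ face T X (n+2) (j-1)) →
      ∃ e : iterObj T X (n+3) ⟶ iterObj T X (n+4),
        ∀ i, i ≤ n+3 → e ≫ face T X (n+3) i = A i)
    (a : ℕ → (iterObj T X (n+1) ⟶ iterObj T X (n+2)))
    (b : ℕ → (iterObj T X (n+2) ⟶ iterObj T X (n+3)))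
    (hb1 : b 0 ≫ face T X (n+2) 0 = u (n+1))
    (hb2 : b (n+1) ≫ face T X (n+2) (n+2) = 𝟙 _)
    (hb4 : ∀ i, 1 ≤ i → i ≤ n+1 →
      b i ≫ face T X (n+2) i = b (i-1) ≫ face T X (n+2) i)
    (hab3 : ∀ i j, i < j → j ≤ n+1 →
      b j ≫ face T X (n+2) i = face T X (n+1) i ≫ a (j-1))
    (hab5 : ∀ i j, j + 1 < i → i ≤ n+2 → j ≤ n+1 →
      b j ≫ face T X (n+2) i = face T X (n+1) (i-1) ≫ a j) :
    ∃ c : ℕ → (iterObj T X (n+3) ⟶ iterObj T X (n+4)),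
      (c 0 ≫ face T X (n+3) 0 = u (n+2)) ∧
      (c (n+2) ≫ face T X (n+3) (n+3) = 𝟙 _) ∧
      (∀ i, 1 ≤ i → i ≤ n+2 → c i ≫ face T X (n+3) i = c (i-1) ≫ face T X (n+3) i) ∧
      (∀ i j, i < j → j ≤ n+2 →
        c j ≫ face T X (n+3) i = face T X (n+2) i ≫ b (j-1)) ∧
      (∀ i j, j + 1 < i → i ≤ n+3 → j ≤ n+2 →
        c j ≫ face T X (n+3) i = face T X (n+2) (i-1) ≫ b j) := by
  -- helper: `hb4` with clean indices
  have hb4' : ∀ i, i ≤ n → b (i+1) ≫ face T X (n+2) (i+1) = b i ≫ face T X (n+2) (i+1) := by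
    intro i hi
    have := hb4 (i+1) (by omega) (by omega)
    simpa using this
  have main : ∀ j, j ≤ n+2 → ∃ c : ℕ → (iterObj T X (n+3) ⟶ iterObj T X (n+4)),
      (c 0 ≫ face T X (n+3) 0 = u (n+2)) ∧
      ∀ l, l ≤ j →
        ((∀ i, i < l → c l ≫ face T X (n+3) i = face T X (n+2) i ≫ b (l-1)) ∧
         (1 ≤ l → c l ≫ face T X (n+3) l = c (l-1) ≫ face T X (n+3) l) ∧
         (∀ i, l + 1 < i → i ≤ n+3 →
            c l ≫ face T X (n+3) i = face T X (n+2) (i-1) ≫ b l) ∧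
         (l = n+2 → c l ≫ face T X (n+3) (n+3) = 𝟙 _)) := by
    intro j
    induction j with
    | zero =>
      intro _
      have hA : ∀ i i', i < i' → i' ≤ n+3 → i ≠ 1 → i' ≠ 1 →
          (if i' = 0 then u (n+2) else face T X (n+2) (i'-1) ≫ b 0) ≫ face T X (n+2) i
        = (if i = 0 then u (n+2) else face T X (n+2) (i-1) ≫ b 0)
            ≫ face T X (n+2) (i'-1) := by
        intro i i' hii' hi' hi1 hi'1
        by_cases hi0 : i = 0
        · subst hi0
          rw [if_pos rfl, if_neg (by omega : ¬ i' = 0), Category.assoc, hb1]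
          exact (hu (n+1) (i'-1) (by omega)).symm
        · rw [if_neg (by omega : ¬ i' = 0), if_neg hi0, Category.assoc, Category.assoc,
            hab5 i 0 (by omega) (by omega) (by omega),
            hab5 (i'-1) 0 (by omega) (by omega) (by omega),
            ← Category.assoc, ← Category.assoc, sid2 T X n (i-1) (i'-1) (by omega)]
      obtain ⟨c0, hc0⟩ := hornF 1 (by omega)
        (fun i => if i = 0 then u (n+2) else face T X (n+2) (i-1) ≫ b 0) hA
      refine ⟨fun _ => c0, ?_, ?_⟩
      · have h0 := hc0 0 (by omega) (by omega)
        beta_reduce at h0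
        rw [if_pos rfl] at h0
        exact h0
      · intro l hl
        have hl0 : l = 0 := by omega
        subst hl0
        refine ⟨fun i hi => absurd hi (by omega), fun h1 => absurd h1 (by omega), ?_,
          fun h => absurd h (by omega)⟩
        intro i h1i hi3
        have hi := hc0 i (by omega) (by omega)
        beta_reduce at hi
        rw [if_neg (by omega : ¬ i = 0)] at hi
        exact hi
    | succ j ihj =>
      intro hj1
      obtain ⟨c, hcSc1, hcS⟩ := ihj (by omega)
      have S3 : ∀ l i, l ≤ j → i < l →
          c l ≫ face T X (n+3) i = face T X (n+2) i ≫ b (l-1) :=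
        fun l i hl hi => (hcS l hl).1 i hi
      have S4 : ∀ l, l ≤ j → 1 ≤ l →
          c l ≫ face T X (n+3) l = c (l-1) ≫ face T X (n+3) l :=
        fun l hl h1 => (hcS l hl).2.1 h1
      have S5 : ∀ l i, l ≤ j → l+1 < i → i ≤ n+3 →
          c l ≫ face T X (n+3) i = face T X (n+2) (i-1) ≫ b l :=
        fun l i hl h1 h2 => (hcS l hl).2.2.1 i h1 h2
      -- the key diagonal-compatibility computation, shared by horn and sphere cases:
      -- for i ≤ j it holds that
      -- (c j ≫ face (j+1)) ≫ face i = (face i ≫ b j) ≫ face j.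
      have diag : ∀ i, i ≤ j →
          (c j ≫ face T X (n+3) (j+1)) ≫ face T X (n+2) i
            = (face T X (n+2) i ≫ b j) ≫ face T X (n+2) j := by
        intro i hij
        have e := sid3 T X n i (j+1) (by omega)
        simp only [Nat.add_sub_cancel] at e
        rw [Category.assoc, e]
        by_cases hij2 : i < j
        · rw [← Category.assoc, S3 j i le_rfl hij2]
          have h4 : b (j-1) ≫ face T X (n+2) j = b j ≫ face T X (n+2) j := by
            have := hb4 j (by omega) (by omega)
            exact this.symm
          rw [Category.assoc, h4, ← Category.assoc]
        · by_cases hj0 : j = 0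
          · obtain rfl : i = 0 := by omega
            subst hj0
            rw [← Category.assoc, hcSc1, hu (n+1) 0 (by omega), ← hb1, Category.assoc]
          · have hieq : i = j := by omega
            rw [hieq, ← Category.assoc, S4 j le_rfl (by omega)]
            have e2 := sid3 T X n j (j+1) (by omega)
            simp only [Nat.add_sub_cancel] at e2
            have t5 := S5 (j-1) (j+1) (by omega) (by omega) (by omega)
            simp only [Nat.add_sub_cancel] at t5
            have h4 : b (j-1) ≫ face T X (n+2) j = b j ≫ face T X (n+2) j :=
              (hb4 j (by omega) (by omega)).symm
            rw [Category.assoc, ← e2, ← Category.assoc, t5, Category.assoc, h4,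
              ← Category.assoc]
      -- the upper-face computation, shared by horn and sphere cases: for j+1 < i' ≤ n+3,
      -- (face (i'-1) ≫ b (j+1)) ≫ face (j+1) = (c j ≫ face (j+1)) ≫ face (i'-1),
      -- provided j+1 ≤ n+1 (so that `hb4` applies to b (j+1)).
      have upper : ∀ i', j+1 < i' → i' ≤ n+3 → j + 1 ≤ n + 1 →
          (face T X (n+2) (i'-1) ≫ b (j+1)) ≫ face T X (n+2) (j+1)
            = (c j ≫ face T X (n+3) (j+1)) ≫ face T X (n+2) (i'-1) := by
        intro i' h1 h2 h3
        have e := sid3 T X n (j+1) i' (by omega)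
        have t5 := S5 j i' le_rfl (by omega) (by omega)
        have h4 := hb4' j (by omega)
        calc (face T X (n+2) (i'-1) ≫ b (j+1)) ≫ face T X (n+2) (j+1)
            = face T X (n+2) (i'-1) ≫ (b (j+1) ≫ face T X (n+2) (j+1)) := by
              rw [Category.assoc]
          _ = face T X (n+2) (i'-1) ≫ (b j ≫ face T X (n+2) (j+1)) := by rw [h4]
          _ = (face T X (n+2) (i'-1) ≫ b j) ≫ face T X (n+2) (j+1) := by
              rw [Category.assoc]
          _ = (c j ≫ face T X (n+3) i') ≫ face T X (n+2) (j+1) := by rw [t5]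
          _ = c j ≫ (face T X (n+3) i' ≫ face T X (n+2) (j+1)) := by rw [Category.assoc]
          _ = c j ≫ (face T X (n+3) (j+1) ≫ face T X (n+2) (i'-1)) := by rw [e]
          _ = (c j ≫ face T X (n+3) (j+1)) ≫ face T X (n+2) (i'-1) := by
              rw [Category.assoc]
      by_cases htop : j + 1 ≤ n + 1
      · -- horn case: fill the (j+2)-horn
        have hA : ∀ i i', i < i' → i' ≤ n+3 → i ≠ j+2 → i' ≠ j+2 →
            (if i' < j+1 then face T X (n+2) i' ≫ b j else if i' = j+1 then
              c j ≫ face T X (n+3) (j+1) else face T X (n+2) (i'-1) ≫ b (j+1))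
              ≫ face T X (n+2) i
          = (if i < j+1 then face T X (n+2) i ≫ b j else if i = j+1 then
              c j ≫ face T X (n+3) (j+1) else face T X (n+2) (i-1) ≫ b (j+1))
              ≫ face T X (n+2) (i'-1) := by
          intro i i' hii' hi' hik hi'k
          by_cases hc1 : i' < j+1
          · -- C1 : i < i' ≤ j, both lower faces
            rw [if_pos hc1, if_pos (by omega : i < j+1), Category.assoc, Category.assoc,
              hab3 i j (by omega) (by omega), hab3 (i'-1) j (by omega) (by omega),
              ← Category.assoc, ← Category.assoc, sid2 T X n i i' hii']
          · by_cases hc2 : i' = j+1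
            · -- C2 : i ≤ j, i' = j+1 : use `diag`
              subst hc2
              rw [if_neg (by omega : ¬ j+1 < j+1), if_pos rfl,
                if_pos (by omega : i < j+1)]
              simp only [Nat.add_sub_cancel]
              exact diag i (by omega)
            · -- i' ≥ j+3
              rw [if_neg hc1, if_neg hc2]
              by_cases hd1 : i < j+1
              · -- C3 : lower face vs upper face
                rw [if_pos hd1, Category.assoc, Category.assoc,
                  hab3 i (j+1) (by omega) (by omega),
                  hab5 (i'-1) j (by omega) (by omega) (by omega)]
                simp only [Nat.add_sub_cancel]
                rw [← Category.assoc, ← Category.assoc, sid2 T X n i (i'-1) (by omega)]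
              · by_cases hd2 : i = j+1
                · -- C4 : diagonal vs upper face : use `upper`
                  subst hd2
                  rw [if_neg (by omega : ¬ j+1 < j+1), if_pos rfl]
                  exact upper i' (by omega) (by omega) htop
                · -- C5 : two upper faces
                  rw [if_neg (by omega : ¬ i < j+1), if_neg hd2, Category.assoc,
                    Category.assoc, hab5 i (j+1) (by omega) (by omega) (by omega),
                    hab5 (i'-1) (j+1) (by omega) (by omega) (by omega),
                    ← Category.assoc, ← Category.assoc,
                    sid2 T X n (i-1) (i'-1) (by omega)]
        obtain ⟨d, hd⟩ := hornF (j+2) (by omega)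
          (fun i => if i < j+1 then face T X (n+2) i ≫ b j else if i = j+1 then
            c j ≫ face T X (n+3) (j+1) else face T X (n+2) (i-1) ≫ b (j+1)) hA
        refine ⟨Function.update c (j+1) d, ?_, ?_⟩
        · rw [Function.update_of_ne (by omega : (0:ℕ) ≠ j+1)]
          exact hcSc1
        · intro l hl
          by_cases hl2 : l = j+1
          · subst hl2
            rw [Function.update_self]
            refine ⟨?_, ?_, ?_, fun hEq => absurd hEq (by omega)⟩
            · intro i hi
              have hdi := hd i (by omega) (by omega)
              beta_reduce at hdi
              rw [if_pos hi] at hdi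
              rw [show j+1-1 = j from rfl]
              exact hdi
            · intro _
              have hdi := hd (j+1) (by omega) (by omega)
              beta_reduce at hdi
              rw [if_neg (by omega : ¬ j+1 < j+1), if_pos rfl] at hdi
              rw [show j+1-1 = j from rfl, Function.update_of_ne (by omega : j ≠ j+1)]
              exact hdi
            · intro i h1 h2
              have hdi := hd i (by omega) (by omega)
              beta_reduce at hdi
              rw [if_neg (by omega : ¬ i < j+1), if_neg (by omega : ¬ i = j+1)] at hdi
              exact hdi
          · have hlj : l ≤ j := by omega
            rw [Function.update_of_ne hl2]
            refine ⟨fun i hi => S3 l i hlj hi, ?_, fun i h1 h2 => S5 l i hlj h1 h2,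
              fun hEq => absurd hEq (by omega)⟩
            intro h1
            rw [Function.update_of_ne (by omega : l - 1 ≠ j+1)]
            exact S4 l hlj h1
      · -- sphere case : j = n+1, fill the whole boundary
        obtain rfl : j = n+1 := by omega
        have hA : ∀ i i', i < i' → i' ≤ n+3 →
            (if i' < n+2 then face T X (n+2) i' ≫ b (n+1) else if i' = n+2 then
              c (n+1) ≫ face T X (n+3) (n+2) else 𝟙 _) ≫ face T X (n+2) i
          = (if i < n+2 then face T X (n+2) i ≫ b (n+1) else if i = n+2 then
              c (n+1) ≫ face T X (n+3) (n+2) else 𝟙 _)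
              ≫ face T X (n+2) (i'-1) := by
          intro i i' hii' hi'
          by_cases hc1 : i' < n+2
          · -- two lower faces
            rw [if_pos hc1, if_pos (by omega : i < n+2), Category.assoc, Category.assoc,
              hab3 i (n+1) (by omega) (by omega), hab3 (i'-1) (n+1) (by omega) (by omega),
              ← Category.assoc, ← Category.assoc, sid2 T X n i i' hii']
          · by_cases hc2 : i' = n+2
            · -- diagonal : use `diag`
              subst hc2
              rw [if_neg (by omega : ¬ n+2 < n+2), if_pos rfl,
                if_pos (by omega : i < n+2)]
              rw [show n+2-1 = n+1 from rfl]
              exact diag i (by omega)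
            · -- i' = n+3 : top face is the identity
              obtain rfl : i' = n+3 := by omega
              rw [if_neg (by omega : ¬ n+3 < n+2), if_neg (by omega : ¬ n+3 = n+2),
                Category.id_comp, show n+3-1 = n+2 from rfl]
              by_cases hii : i < n+2
              · rw [if_pos hii, Category.assoc, hb2, Category.comp_id]
              · obtain rfl : i = n+2 := by omega
                rw [if_neg (by omega : ¬ n+2 < n+2), if_pos rfl]
                have e := sid3 T X n (n+2) (n+3) (by omega)
                rw [show n+3-1 = n+2 from rfl] at e
                have t5 := S5 (n+1) (n+3) le_rfl (by omega) (by omega)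
                rw [show n+3-1 = n+2 from rfl] at t5
                rw [Category.assoc, ← e, ← Category.assoc, t5, Category.assoc, hb2,
                  Category.comp_id]
        obtain ⟨e, he⟩ := sphF
          (fun i => if i < n+2 then face T X (n+2) i ≫ b (n+1) else if i = n+2 then
            c (n+1) ≫ face T X (n+3) (n+2) else 𝟙 _) hA
        refine ⟨Function.update c (n+2) e, ?_, ?_⟩
        · rw [Function.update_of_ne (by omega : (0:ℕ) ≠ n+2)]
          exact hcSc1
        · intro l hl
          by_cases hl2 : l = n+2
          · subst hl2
            rw [Function.update_self]
            refine ⟨?_, ?_, fun i h1 h2 => absurd h2 (by omega), fun _ => ?_⟩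
            · intro i hi
              have hei := he i (by omega)
              beta_reduce at hei
              rw [if_pos hi] at hei
              rw [show n+2-1 = n+1 from rfl]
              exact hei
            · intro _
              have hei := he (n+2) (by omega)
              beta_reduce at hei
              rw [if_neg (by omega : ¬ n+2 < n+2), if_pos rfl] at hei
              rw [show n+2-1 = n+1 from rfl, Function.update_of_ne (by omega : n+1 ≠ n+2)]
              exact hei
            · have hei := he (n+3) (by omega)
              beta_reduce at hei
              rw [if_neg (by omega : ¬ n+3 < n+2), if_neg (by omega : ¬ n+3 = n+2)] at hei
              exact hei
          · have hlj : l ≤ n+1 := by omega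
            rw [Function.update_of_ne hl2]
            refine ⟨fun i hi => S3 l i hlj hi, ?_, fun i h1 h2 => S5 l i hlj h1 h2,
              fun hEq => absurd hEq (by omega)⟩
            intro h1
            rw [Function.update_of_ne (by omega : l - 1 ≠ n+2)]
            exact S4 l hlj h1
  obtain ⟨c, hc1, hcS⟩ := main (n+2) le_rfl
  exact ⟨c, hc1, (hcS (n+2) le_rfl).2.2.2 rfl,
    fun i h1 h2 => (hcS i h2).2.1 h1,
    fun i jj hij hj => (hcS jj hj).1 i hij,
    fun i jj h1 h2 h3 => (hcS jj h3).2.2.1 i h1 h2⟩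

end HomotStep
section BuildHomot

variable (T : Comonad C) (X : C)

/-- Any semi-simplicial endomap of the resolution commuting with the augmentation is
simplicially homotopic to the identity. -/
lemma buildHomot
    (u : ∀ n, iterObj T X (n+1) ⟶ iterObj T X (n+1))
    (hu0 : u 0 ≫ face T X 0 0 = face T X 0 0)
    (hu : ∀ n i, i ≤ n + 1 → u (n+1) ≫ face T X (n+1) i = face T X (n+1) i ≫ u n)
    (hkn : ∀ m : ℕ, ∀ (n k : ℕ), k ≤ n + 2 →
      ∀ a : ℕ → (iterObj T X (m+1) ⟶ iterObj T X (n + 2)),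
      (∀ i j, i < j → j ≤ n + 2 → i ≠ k → j ≠ k →
        a j ≫ face T X (n+1) i = a i ≫ face T X (n+1) (j - 1)) →
      ∃ b : iterObj T X (m+1) ⟶ iterObj T X (n + 3), ∀ i, i ≤ n + 2 → i ≠ k →
        b ≫ face T X (n+2) i = a i) :
    Homot (fun n => iterObj T X (n+1)) (fun n => iterObj T X (n+1))
      (fun n i => face T X (n+1) i) (fun n i => face T X (n+1) i)
      u (fun n => 𝟙 _) := by
  have hsplit : ∀ m : ℕ, (T.δ.app (iterObj T X m)) ≫ T.ε.app (iterObj T X (m+1))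
      = 𝟙 (iterObj T X (m+1)) := fun m => T.left_counit (iterObj T X m)
  -- level 0 of the homotopy
  have hc0 : ∀ i j, i < j → j ≤ 0 + 1 →
      (if j = 0 then u 0 else 𝟙 (iterObj T X 1)) ≫ face T X 0 i
        = (if i = 0 then u 0 else 𝟙 (iterObj T X 1)) ≫ face T X 0 (j-1) := by
    intro i j hij hj
    obtain rfl : i = 0 := by omega
    obtain rfl : j = 1 := by omega
    rw [if_neg one_ne_zero, if_pos rfl, Category.id_comp,
      show (1:ℕ)-1 = 0 from rfl, hu0]
  obtain ⟨h00, hh00⟩ := sphereFill T X (iterObj T X 1) (T.δ.app (iterObj T X 0))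
    (hsplit 0) (hkn 0) 0 (fun i => if i = 0 then u 0 else 𝟙 _) hc0
  have e000 : h00 ≫ face T X 1 0 = u 0 := by
    have h := hh00 0 (by omega); beta_reduce at h; rwa [if_pos rfl] at h
  have e001 : h00 ≫ face T X 1 1 = 𝟙 _ := by
    have h := hh00 1 (by omega); beta_reduce at h; rwa [if_neg one_ne_zero] at h
  -- level 1, component 0 (a horn)
  have hc1 : ∀ i j, i < j → j ≤ 0+2 → i ≠ 1 → j ≠ 1 →
      (if j = 0 then u 1 else face T X 1 1 ≫ h00) ≫ face T X 1 i
        = (if i = 0 then u 1 else face T X 1 1 ≫ h00) ≫ face T X 1 (j-1) := by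
    intro i j hij hj hi1 hj1
    obtain rfl : i = 0 := by omega
    obtain rfl : j = 2 := by omega
    rw [if_neg (by omega : (2:ℕ) ≠ 0), if_pos rfl, Category.assoc, e000,
      show (2:ℕ)-1 = 1 from rfl, hu 0 1 (by omega)]
  obtain ⟨h10, hh10⟩ := hkn 1 0 1 (by omega)
    (fun i => if i = 0 then u 1 else face T X 1 1 ≫ h00) hc1
  have e100 : h10 ≫ face T X 2 0 = u 1 := by
    have h := hh10 0 (by omega) (by omega); beta_reduce at h; rwa [if_pos rfl] at h
  have e102 : h10 ≫ face T X 2 2 = face T X 1 1 ≫ h00 := by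
    have h := hh10 2 (by omega) (by omega); beta_reduce at h
    rwa [if_neg (by omega : (2:ℕ) ≠ 0)] at h
  -- level 1, component 1 (a sphere)
  have hc2 : ∀ i j, i < j → j ≤ 1 + 1 →
      (if j = 0 then face T X 1 0 ≫ h00 else if j = 1 then h10 ≫ face T X 2 1 else 𝟙 _)
        ≫ face T X 1 i
      = (if i = 0 then face T X 1 0 ≫ h00 else if i = 1 then h10 ≫ face T X 2 1 else 𝟙 _)
        ≫ face T X 1 (j-1) := by
    intro i j hij hj
    by_cases hj2 : j = 1
    · subst hj2
      obtain rfl : i = 0 := by omega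
      rw [if_neg one_ne_zero, if_pos rfl, if_pos rfl, show (1:ℕ)-1 = 0 from rfl]
      have s1 := sid2 T X 0 0 1 (by omega)
      rw [show (1:ℕ)-1 = 0 from rfl] at s1
      calc (h10 ≫ face T X 2 1) ≫ face T X 1 0
          = h10 ≫ (face T X 2 1 ≫ face T X 1 0) := by rw [Category.assoc]
        _ = h10 ≫ (face T X 2 0 ≫ face T X 1 0) := by rw [s1]
        _ = (h10 ≫ face T X 2 0) ≫ face T X 1 0 := by rw [Category.assoc]
        _ = u 1 ≫ face T X 1 0 := by rw [e100]
        _ = face T X 1 0 ≫ u 0 := hu 0 0 (by omega)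
        _ = face T X 1 0 ≫ (h00 ≫ face T X 1 0) := by rw [e000]
        _ = (face T X 1 0 ≫ h00) ≫ face T X 1 0 := by rw [Category.assoc]
    · by_cases hi1 : i = 1
      · obtain rfl : j = 2 := by omega
        subst hi1
        rw [if_neg (by omega : (2:ℕ) ≠ 0), if_neg (by omega : (2:ℕ) ≠ 1),
          if_neg one_ne_zero, if_pos rfl, Category.id_comp, show (2:ℕ)-1 = 1 from rfl]
        have s1 := sid2 T X 0 1 2 (by omega)
        rw [show (2:ℕ)-1 = 1 from rfl] at s1
        refine Eq.symm ?_
        calc (h10 ≫ face T X 2 1) ≫ face T X 1 1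
            = h10 ≫ (face T X 2 1 ≫ face T X 1 1) := by rw [Category.assoc]
          _ = h10 ≫ (face T X 2 2 ≫ face T X 1 1) := by rw [← s1]
          _ = (h10 ≫ face T X 2 2) ≫ face T X 1 1 := by rw [Category.assoc]
          _ = (face T X 1 1 ≫ h00) ≫ face T X 1 1 := by rw [e102]
          _ = face T X 1 1 ≫ (h00 ≫ face T X 1 1) := by rw [Category.assoc]
          _ = face T X 1 1 ≫ 𝟙 _ := by rw [e001]
          _ = face T X 1 1 := by rw [Category.comp_id]
      · obtain rfl : i = 0 := by omega
        obtain rfl : j = 2 := by omega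
        rw [if_neg (by omega : (2:ℕ) ≠ 0), if_neg (by omega : (2:ℕ) ≠ 1),
          if_pos rfl, Category.id_comp, show (2:ℕ)-1 = 1 from rfl,
          Category.assoc, e001, Category.comp_id]
  obtain ⟨h11, hh11⟩ := sphereFill T X (iterObj T X 2) (T.δ.app (iterObj T X 1))
    (hsplit 1) (hkn 1) 1
    (fun i => if i = 0 then face T X 1 0 ≫ h00 else if i = 1 then h10 ≫ face T X 2 1
      else 𝟙 _) hc2
  have e110 : h11 ≫ face T X 2 0 = face T X 1 0 ≫ h00 := by
    have h := hh11 0 (by omega); beta_reduce at h; rwa [if_pos rfl] at h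
  have e111 : h11 ≫ face T X 2 1 = h10 ≫ face T X 2 1 := by
    have h := hh11 1 (by omega); beta_reduce at h
    rwa [if_neg one_ne_zero, if_pos rfl] at h
  have e112 : h11 ≫ face T X 2 2 = 𝟙 _ := by
    have h := hh11 2 (by omega); beta_reduce at h
    rwa [if_neg (by omega : (2:ℕ) ≠ 0), if_neg (by omega : (2:ℕ) ≠ 1)] at h
  -- the chain
  have step8 : ∀ (n : ℕ) (p : ℕ → (iterObj T X (n+1) ⟶ iterObj T X (n+2)))
      (q : ℕ → (iterObj T X (n+2) ⟶ iterObj T X (n+3))),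
      ((p 0 ≫ face T X (n+1) 0 = u n) ∧
       (p n ≫ face T X (n+1) (n+1) = 𝟙 _) ∧
       (∀ i, 1 ≤ i → i ≤ n → p i ≫ face T X (n+1) i = p (i-1) ≫ face T X (n+1) i) ∧
       (q 0 ≫ face T X (n+2) 0 = u (n+1)) ∧
       (q (n+1) ≫ face T X (n+2) (n+2) = 𝟙 _) ∧
       (∀ i, 1 ≤ i → i ≤ n+1 → q i ≫ face T X (n+2) i = q (i-1) ≫ face T X (n+2) i) ∧
       (∀ i j, i < j → j ≤ n+1 →
          q j ≫ face T X (n+2) i = face T X (n+1) i ≫ p (j-1)) ∧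
       (∀ i j, j + 1 < i → i ≤ n+2 → j ≤ n+1 →
          q j ≫ face T X (n+2) i = face T X (n+1) (i-1) ≫ p j)) →
      ∃ r : ℕ → (iterObj T X (n+3) ⟶ iterObj T X (n+4)),
      ((q 0 ≫ face T X (n+2) 0 = u (n+1)) ∧
       (q (n+1) ≫ face T X (n+2) (n+2) = 𝟙 _) ∧
       (∀ i, 1 ≤ i → i ≤ n+1 → q i ≫ face T X (n+2) i = q (i-1) ≫ face T X (n+2) i) ∧
       (r 0 ≫ face T X (n+3) 0 = u (n+2)) ∧
       (r (n+2) ≫ face T X (n+3) (n+3) = 𝟙 _) ∧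
       (∀ i, 1 ≤ i → i ≤ n+2 → r i ≫ face T X (n+3) i = r (i-1) ≫ face T X (n+3) i) ∧
       (∀ i j, i < j → j ≤ n+2 →
          r j ≫ face T X (n+3) i = face T X (n+2) i ≫ q (j-1)) ∧
       (∀ i j, j + 1 < i → i ≤ n+3 → j ≤ n+2 →
          r j ≫ face T X (n+3) i = face T X (n+2) (i-1) ≫ q j)) := by
    intro n p q hR
    obtain ⟨hp1, hp2, hp4, hq1, hq2, hq4, hqp3, hqp5⟩ := hR
    have hornF : ∀ k, k ≤ n+3 → ∀ A : ℕ → (iterObj T X (n+3) ⟶ iterObj T X (n+3)),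
        (∀ i j, i < j → j ≤ n+3 → i ≠ k → j ≠ k →
          A j ≫ face T X (n+2) i = A i ≫ face T X (n+2) (j-1)) →
        ∃ d : iterObj T X (n+3) ⟶ iterObj T X (n+4),
          ∀ i, i ≤ n+3 → i ≠ k → d ≫ face T X (n+3) i = A i :=
      fun k hk A hA => hkn (n+2) (n+1) k (by omega) A hA
    have sphF : ∀ A : ℕ → (iterObj T X (n+3) ⟶ iterObj T X (n+3)),
        (∀ i j, i < j → j ≤ n+3 →
          A j ≫ face T X (n+2) i = A i ≫ face T X (n+2) (j-1)) →
        ∃ e : iterObj T X (n+3) ⟶ iterObj T X (n+4),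
          ∀ i, i ≤ n+3 → e ≫ face T X (n+3) i = A i :=
      fun A hA => sphereFill T X (iterObj T X (n+3)) (T.δ.app (iterObj T X (n+2)))
        (hsplit (n+2)) (hkn (n+2)) (n+2) A hA
    obtain ⟨c, hc1', hc2', hc4', hc3', hc5'⟩ :=
      homotStep T X u hu n hornF sphF p q hq1 hq2 hq4 hqp3 hqp5
    exact ⟨c, hq1, hq2, hq4, hc1', hc2', hc4', hc3', hc5'⟩
  have base8 : ∃ q : ℕ → (iterObj T X 2 ⟶ iterObj T X 3),
      (((fun _ => h00) : ℕ → (iterObj T X 1 ⟶ iterObj T X 2)) 0 ≫ face T X 1 0 = u 0) ∧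
      ((fun _ => h00) 0 ≫ face T X 1 1 = 𝟙 _) ∧
      (∀ i, 1 ≤ i → i ≤ 0 →
        (fun _ => h00) i ≫ face T X 1 i = (fun _ => h00) (i-1) ≫ face T X 1 i) ∧
      (q 0 ≫ face T X 2 0 = u 1) ∧
      (q 1 ≫ face T X 2 2 = 𝟙 _) ∧
      (∀ i, 1 ≤ i → i ≤ 1 → q i ≫ face T X 2 i = q (i-1) ≫ face T X 2 i) ∧
      (∀ i j, i < j → j ≤ 1 → q j ≫ face T X 2 i = face T X 1 i ≫ (fun _ => h00) (j-1)) ∧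
      (∀ i j, j + 1 < i → i ≤ 2 → j ≤ 1 →
        q j ≫ face T X 2 i = face T X 1 (i-1) ≫ (fun _ => h00) j) := by
    refine ⟨fun i => if i = 0 then h10 else h11, e000, e001,
      fun i h1 h2 => absurd h2 (by omega), ?_, ?_, ?_, ?_, ?_⟩
    · beta_reduce; rw [if_pos rfl]; exact e100
    · beta_reduce; rw [if_neg one_ne_zero]; exact e112
    · intro i h1 h2
      obtain rfl : i = 1 := by omega
      beta_reduce
      rw [if_neg one_ne_zero, if_pos rfl]
      exact e111
    · intro i j h1 h2
      obtain rfl : i = 0 := by omega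
      obtain rfl : j = 1 := by omega
      beta_reduce
      rw [if_neg one_ne_zero]
      exact e110
    · intro i j h1 h2 h3
      obtain rfl : j = 0 := by omega
      obtain rfl : i = 2 := by omega
      beta_reduce
      rw [if_pos rfl]
      exact e102
  obtain ⟨q1, hbase⟩ := base8
  obtain ⟨h, hh0, hh⟩ := chainGen
    (α := fun n => ℕ → (iterObj T X (n+1) ⟶ iterObj T X (n+2)))
    (R := fun n p q =>
      (p 0 ≫ face T X (n+1) 0 = u n) ∧
      (p n ≫ face T X (n+1) (n+1) = 𝟙 _) ∧
      (∀ i, 1 ≤ i → i ≤ n → p i ≫ face T X (n+1) i = p (i-1) ≫ face T X (n+1) i) ∧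
      (q 0 ≫ face T X (n+2) 0 = u (n+1)) ∧
      (q (n+1) ≫ face T X (n+2) (n+2) = 𝟙 _) ∧
      (∀ i, 1 ≤ i → i ≤ n+1 → q i ≫ face T X (n+2) i = q (i-1) ≫ face T X (n+2) i) ∧
      (∀ i j, i < j → j ≤ n+1 →
        q j ≫ face T X (n+2) i = face T X (n+1) i ≫ p (j-1)) ∧
      (∀ i j, j + 1 < i → i ≤ n+2 → j ≤ n+1 →
        q j ≫ face T X (n+2) i = face T X (n+1) (i-1) ≫ p j))
    (fun _ => h00) ⟨q1, hbase⟩ step8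
  exact ⟨fun n => h n,
    fun n => (hh n).1,
    fun n => (hh n).2.1,
    fun n i j h1 h2 => (hh n).2.2.2.2.2.2.1 i j h1 h2,
    fun n i h1 h2 => (hh n).2.2.1 i h1 h2,
    fun n i j h1 h2 h3 => (hh n).2.2.2.2.2.2.2 i j h1 h2 h3⟩

end BuildHomot
/-- Let `G` and `K` be two comonads on `C` generating the same
projective class `𝒫 = isProj G = isProj K` (hypothesis `hsame`), and suppose this class
is Kan: for every object `X` and every `P` in the class, the simplicial sets
`Hom(P, 𝔾X)` and `Hom(P, 𝕂X)` are Kan.  Then for every `X` the augmented simplicial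
objects `𝔾X` and `𝕂X` are homotopically equivalent: there are semi-simplicial maps
`f : 𝔾X ⟶ 𝕂X` and `g : 𝕂X ⟶ 𝔾X` commuting with the identity on `X`, such that
`g ∘ f` and `f ∘ g` are simplicially homotopic to the respective identities. -/
theorem statement8 (G K : Comonad C)
    (hsame : ∀ {A B : C} (e : A ⟶ B), inE G e ↔ inE K e)
    (hkan : ∀ (X P : C), isProj G P →
      KanRaw (fun n => iterObj G X (n + 1)) (fun n i => face G X (n + 1) i) P ∧
      KanRaw (fun n => iterObj K X (n + 1)) (fun n i => face K X (n + 1) i) P)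
    (X : C) :
    ∃ (f : ∀ n, iterObj G X (n + 1) ⟶ iterObj K X (n + 1))
      (g : ∀ n, iterObj K X (n + 1) ⟶ iterObj G X (n + 1)),
      (f 0 ≫ face K X 0 0 = face G X 0 0) ∧
      (∀ n i, i ≤ n + 1 →
        f (n + 1) ≫ face K X (n + 1) i = face G X (n + 1) i ≫ f n) ∧
      (g 0 ≫ face G X 0 0 = face K X 0 0) ∧
      (∀ n i, i ≤ n + 1 →
        g (n + 1) ≫ face G X (n + 1) i = face K X (n + 1) i ≫ g n) ∧
      Homot (fun n => iterObj G X (n + 1)) (fun n => iterObj G X (n + 1))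
        (fun n i => face G X (n + 1) i) (fun n i => face G X (n + 1) i)
        (fun n => f n ≫ g n) (fun n => 𝟙 (iterObj G X (n + 1))) ∧
      Homot (fun n => iterObj K X (n + 1)) (fun n => iterObj K X (n + 1))
        (fun n i => face K X (n + 1) i) (fun n i => face K X (n + 1) i)
        (fun n => g n ≫ f n) (fun n => 𝟙 (iterObj K X (n + 1))) := by
  have projG : ∀ Z : C, isProj G (G.obj Z) := fun Z => isProj_obj G Z
  have projK : ∀ Z : C, isProj G (K.obj Z) := fun Z {A B} e he g => (hsame e).mp he Z g
  -- the comparison map f : 𝔾X ⟶ 𝕂X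
  have hsrGK : ∀ m : ℕ, ∃ r : iterObj G X (m+1) ⟶ K.obj (iterObj G X (m+1)),
      r ≫ K.ε.app (iterObj G X (m+1)) = 𝟙 _ := fun m =>
    projG (iterObj G X m) (K.ε.app (iterObj G X (m+1)))
      ((hsame _).mpr (inE_eps K _)) (𝟙 _)
  have hknGK : ∀ m : ℕ, ∀ (n k : ℕ), k ≤ n + 2 →
      ∀ a : ℕ → (iterObj G X (m+1) ⟶ iterObj K X (n + 2)),
      (∀ i j, i < j → j ≤ n + 2 → i ≠ k → j ≠ k →
        a j ≫ face K X (n+1) i = a i ≫ face K X (n+1) (j - 1)) →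
      ∃ b : iterObj G X (m+1) ⟶ iterObj K X (n + 3), ∀ i, i ≤ n + 2 → i ≠ k →
        b ≫ face K X (n+2) i = a i :=
    fun m => ((hkan X (iterObj G X (m+1)) (projG (iterObj G X m))).2).2
  have base0GK : ∃ f0 : iterObj G X 1 ⟶ iterObj K X 1,
      f0 ≫ face K X 0 0 = face G X 0 0 := by
    have hin : inE G (face K X 0 0) := by
      rw [face_zero K X 0]
      exact (hsame _).mpr (inE_eps K _)
    exact projG X (face K X 0 0) hin (face G X 0 0)
  obtain ⟨f, hf0, hf⟩ := buildMap G K X hsrGK hknGK base0GK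
  -- the comparison map g : 𝕂X ⟶ 𝔾X
  have hsrKG : ∀ m : ℕ, ∃ r : iterObj K X (m+1) ⟶ G.obj (iterObj K X (m+1)),
      r ≫ G.ε.app (iterObj K X (m+1)) = 𝟙 _ := fun m =>
    projK (iterObj K X m) (G.ε.app (iterObj K X (m+1))) (inE_eps G _) (𝟙 _)
  have hknKG : ∀ m : ℕ, ∀ (n k : ℕ), k ≤ n + 2 →
      ∀ a : ℕ → (iterObj K X (m+1) ⟶ iterObj G X (n + 2)),
      (∀ i j, i < j → j ≤ n + 2 → i ≠ k → j ≠ k →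
        a j ≫ face G X (n+1) i = a i ≫ face G X (n+1) (j - 1)) →
      ∃ b : iterObj K X (m+1) ⟶ iterObj G X (n + 3), ∀ i, i ≤ n + 2 → i ≠ k →
        b ≫ face G X (n+2) i = a i :=
    fun m => ((hkan X (iterObj K X (m+1)) (projK (iterObj K X m))).1).2
  have base0KG : ∃ g0 : iterObj K X 1 ⟶ iterObj G X 1,
      g0 ≫ face G X 0 0 = face K X 0 0 := by
    have hin : inE G (face G X 0 0) := by
      rw [face_zero G X 0]
      exact inE_eps G _
    exact projK X (face G X 0 0) hin (face K X 0 0)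
  obtain ⟨g, hg0, hg⟩ := buildMap K G X hsrKG hknKG base0KG
  -- the homotopies
  have hknGG : ∀ m : ℕ, ∀ (n k : ℕ), k ≤ n + 2 →
      ∀ a : ℕ → (iterObj G X (m+1) ⟶ iterObj G X (n + 2)),
      (∀ i j, i < j → j ≤ n + 2 → i ≠ k → j ≠ k →
        a j ≫ face G X (n+1) i = a i ≫ face G X (n+1) (j - 1)) →
      ∃ b : iterObj G X (m+1) ⟶ iterObj G X (n + 3), ∀ i, i ≤ n + 2 → i ≠ k →
        b ≫ face G X (n+2) i = a i :=
    fun m => ((hkan X (iterObj G X (m+1)) (projG (iterObj G X m))).1).2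
  have hknKK : ∀ m : ℕ, ∀ (n k : ℕ), k ≤ n + 2 →
      ∀ a : ℕ → (iterObj K X (m+1) ⟶ iterObj K X (n + 2)),
      (∀ i j, i < j → j ≤ n + 2 → i ≠ k → j ≠ k →
        a j ≫ face K X (n+1) i = a i ≫ face K X (n+1) (j - 1)) →
      ∃ b : iterObj K X (m+1) ⟶ iterObj K X (n + 3), ∀ i, i ≤ n + 2 → i ≠ k →
        b ≫ face K X (n+2) i = a i :=
    fun m => ((hkan X (iterObj K X (m+1)) (projK (iterObj K X m))).2).2
  have hu0G : (fun n => f n ≫ g n) 0 ≫ face G X 0 0 = face G X 0 0 := by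
    beta_reduce
    rw [Category.assoc, hg0]
    exact hf0
  have huG : ∀ n i, i ≤ n + 1 → (fun n => f n ≫ g n) (n+1) ≫ face G X (n+1) i
      = face G X (n+1) i ≫ (fun n => f n ≫ g n) n := by
    intro n i hi
    beta_reduce
    rw [Category.assoc, hg n i hi, ← Category.assoc, hf n i hi, Category.assoc]
  have hu0K : (fun n => g n ≫ f n) 0 ≫ face K X 0 0 = face K X 0 0 := by
    beta_reduce
    rw [Category.assoc, hf0]
    exact hg0
  have huK : ∀ n i, i ≤ n + 1 → (fun n => g n ≫ f n) (n+1) ≫ face K X (n+1) i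
      = face K X (n+1) i ≫ (fun n => g n ≫ f n) n := by
    intro n i hi
    beta_reduce
    rw [Category.assoc, hf n i hi, ← Category.assoc, hg n i hi, Category.assoc]
  have HG := buildHomot G X (fun n => f n ≫ g n) hu0G huG hknGG
  have HK := buildHomot K X (fun n => g n ≫ f n) hu0K huK hknKK
  exact ⟨f, g, hf0, hf, hg0, hg, HG, HK⟩

end Statement8
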